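/- A quadratic edge has at most two tangent points whose tangent line passes through the origin: for edge nodes a, b, c ∈ ℝ², if the three determinants aₓ b_y − a_y bₓ, aₓ c_y − a_y cₓ, and bₓ c_y − b_y cₓ are not all zero, then the set {γ ∈ ℝ : x(γ)·y′(γ) = y(γ)·x′(γ)} has at most two elements, where the prime denotes differentiation with respect to γ. -/

import Mathlib

/-- The second-order edge shape functions. -/
noncomputable def J₁ (γ : ℝ) : ℝ := 2*γ^2 - 3*γ + 1
noncomputable def J₂ (γ : ℝ) : ℝ := 2*γ^2 - γ
noncomputable def J₃ (γ : ℝ) : ℝ := -4*γ^2 + 4*γ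

/-- The quadratic edge parametrization through nodes `a`, `b`, `c` in `ℝ²`. -/
noncomputable def e (a b c : ℝ × ℝ) (γ : ℝ) : ℝ × ℝ :=
  J₁ γ • a + J₂ γ • b + J₃ γ • c

/-- The `x`-component of the quadratic edge parametrization. -/
noncomputable def ex (a b c : ℝ × ℝ) (γ : ℝ) : ℝ := (e a b c γ).1

/-- The `y`-component of the quadratic edge parametrization. -/
noncomputable def ey (a b c : ℝ × ℝ) (γ : ℝ) : ℝ := (e a b c γ).2

lemma quad_hasDerivAt (α β δ γ : ℝ) :
    HasDerivAt (fun x : ℝ => α * x ^ 2 + β * x + δ) (2 * α * γ + β) γ := by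
  have := (((hasDerivAt_pow 2 γ).const_mul α).add ((hasDerivAt_id' γ).const_mul β)).add_const δ
  refine this.congr_deriv ?_
  push_cast
  ring

lemma quad_subset (A B C : ℝ) (h : ¬ (A = 0 ∧ B = 0 ∧ C = 0)) :
    ∃ γ₁ γ₂ : ℝ, {x : ℝ | A * x ^ 2 + B * x + C = 0} ⊆ {γ₁, γ₂} := by
  by_cases hA : A = 0
  · by_cases hB : B = 0
    · have hC : C ≠ 0 := by tauto
      refine ⟨0, 0, fun x hx => ?_⟩
      simp only [Set.mem_setOf_eq, hA, hB] at hx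
      exact absurd (by linarith) hC
    · refine ⟨-C / B, -C / B, fun x hx => ?_⟩
      simp only [Set.mem_setOf_eq, hA] at hx
      have : x = -C / B := by field_simp; linarith
      simp [this]
  · by_cases hex : ∃ u v : ℝ, (A * u ^ 2 + B * u + C = 0) ∧ (A * v ^ 2 + B * v + C = 0) ∧ u ≠ v
    · obtain ⟨u, v, hu, hv, huv⟩ := hex
      refine ⟨u, v, fun z hz => ?_⟩
      simp only [Set.mem_setOf_eq] at hz
      simp only [Set.mem_insert_iff, Set.mem_singleton_iff]
      by_contra hc
      push_neg at hc
      obtain ⟨hzu, hzv⟩ := hc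
      have h1 : (z - u) * (A * (z + u) + B) = 0 := by linear_combination hz - hu
      have h2 : (z - v) * (A * (z + v) + B) = 0 := by linear_combination hz - hv
      have e1 : A * (z + u) + B = 0 := by
        rcases mul_eq_zero.1 h1 with h' | h'
        · exact absurd (by linarith) hzu
        · exact h'
      have e2 : A * (z + v) + B = 0 := by
        rcases mul_eq_zero.1 h2 with h' | h'
        · exact absurd (by linarith) hzv
        · exact h'
      have : A * (u - v) = 0 := by ring_nf; linarith [e1, e2]
      rcases mul_eq_zero.1 this with h' | h'
      · exact hA h'
      · exact huv (by linarith)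
    · push_neg at hex
      by_cases hne : ∃ u : ℝ, A * u ^ 2 + B * u + C = 0
      · obtain ⟨u, hu⟩ := hne
        refine ⟨u, u, fun z hz => ?_⟩
        simp only [Set.mem_setOf_eq] at hz
        simp [hex z u hz hu]
      · push_neg at hne
        exact ⟨0, 0, fun z hz => absurd hz (hne z)⟩

/-- A quadratic edge has at most two tangent points whose tangent line passes
through the origin, provided the three pairwise determinants of the edge nodes
are not all zero. -/
theorem at_most_two_origin_tangents (a b c : ℝ × ℝ)
    (h : ¬ (a.1 * b.2 - a.2 * b.1 = 0 ∧
            a.1 * c.2 - a.2 * c.1 = 0 ∧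
            b.1 * c.2 - b.2 * c.1 = 0)) :
    ∃ γ₁ γ₂ : ℝ,
      {γ : ℝ |
        ex a b c γ * deriv (ey a b c) γ = ey a b c γ * deriv (ex a b c) γ}
        ⊆ {γ₁, γ₂} := by
  set αx := 2*a.1 + 2*b.1 - 4*c.1 with hαx
  set βx := -3*a.1 - b.1 + 4*c.1 with hβx
  set αy := 2*a.2 + 2*b.2 - 4*c.2 with hαy
  set βy := -3*a.2 - b.2 + 4*c.2 with hβy
  have hx : ex a b c = fun γ => αx * γ ^ 2 + βx * γ + a.1 := by
    funext γ
    simp only [ex, e, J₁, J₂, J₃, Prod.fst_add, Prod.smul_fst, smul_eq_mul, hαx, hβx]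
    ring
  have hy : ey a b c = fun γ => αy * γ ^ 2 + βy * γ + a.2 := by
    funext γ
    simp only [ey, e, J₁, J₂, J₃, Prod.snd_add, Prod.smul_snd, smul_eq_mul, hαy, hβy]
    ring
  have hdx : ∀ γ, deriv (ex a b c) γ = 2 * αx * γ + βx := by
    intro γ; rw [hx]; exact (quad_hasDerivAt αx βx a.1 γ).deriv
  have hdy : ∀ γ, deriv (ey a b c) γ = 2 * αy * γ + βy := by
    intro γ; rw [hy]; exact (quad_hasDerivAt αy βy a.2 γ).deriv
  set C2 := αx * βy - βx * αy with hC2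
  set C1 := 2 * (αx * a.2 - a.1 * αy) with hC1
  set C0 := βx * a.2 - a.1 * βy with hC0
  have hne : ¬ (C2 = 0 ∧ C1 = 0 ∧ C0 = 0) := by
    rintro ⟨h2, h1, h0⟩
    apply h
    set dab := a.1 * b.2 - a.2 * b.1 with hdab
    set dac := a.1 * c.2 - a.2 * c.1 with hdac
    set dbc := b.1 * c.2 - b.2 * c.1 with hdbc
    have e2 : C2 = 4 * dab - 4 * dac + 4 * dbc := by
      simp only [hC2, hαx, hβx, hαy, hβy, hdab, hdac, hdbc]; ring
    have e1 : C1 = -4 * dab + 8 * dac := by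
      simp only [hC1, hαx, hβx, hαy, hβy, hdab, hdac]; ring
    have e0 : C0 = dab - 4 * dac := by
      simp only [hC0, hαx, hβx, hαy, hβy, hdab, hdac]; ring
    refine ⟨by linarith [e2, e1, e0], by linarith [e2, e1, e0], by linarith [e2, e1, e0]⟩
  obtain ⟨γ₁, γ₂, hsub⟩ := quad_subset C2 C1 C0 hne
  refine ⟨γ₁, γ₂, fun γ hγ => hsub ?_⟩
  simp only [Set.mem_setOf_eq] at hγ ⊢
  rw [hdx γ, hdy γ, hx, hy] at hγ
  simp only at hγ
  linear_combination -hγ
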